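/- Multiplication by a function commutes with the prederivative up to a derivative term: for f of class B^r on ℝⁿ and v ∈ ℝⁿ, the commutator satisfies [m_f, P_v] = m_{L_v f} as operators on differential chains, i.e. m_f ∘ P_v − P_v ∘ m_f = m_{L_v f}. -/

import Mathlib

noncomputable section

open Finsupp Filter

variable {E W : Type*} [NormedAddCommGroup E] [NormedSpace ℝ E]
  [NormedAddCommGroup W] [NormedSpace ℝ W]

/-- Translation of a Dirac chain through the vector `u`. -/
def transl (u : E) (A : E →₀ W) : E →₀ W := Finsupp.mapDomain (· + u) A

/-- The difference operator `Δ_u = T_u - I`. -/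
def del (u : E) (A : E →₀ W) : E →₀ W := transl u A - A

/-- Iterated difference chain along a list of vectors. -/
def diff : List E → (E →₀ W) → (E →₀ W)
  | [], A => A
  | u :: σ, A => del u (diff σ A)

/-- The product of the norms of the vectors in the list `σ`. -/
def lnorm (σ : List E) : ℝ := (σ.map norm).prod

/-- Costs of representations of `A` as sums of `j`-difference chains with `j ≤ r`. -/
def reps (r : ℕ) (A : E →₀ W) : Set ℝ :=
  {c | ∃ (m : ℕ) (σ : Fin m → List E) (p : Fin m → E) (α : Fin m → W),
      (∀ i, (σ i).length ≤ r) ∧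
      A = ∑ i, diff (σ i) (Finsupp.single (p i) (α i)) ∧
      c = ∑ i, lnorm (σ i) * ‖α i‖}

/-- The `B^r` norm of a Dirac chain. -/
def Bnorm (r : ℕ) (A : E →₀ W) : ℝ := sInf (reps r A)

/-- `M` is a `B^r`-bound for the cochain (differential form) `ω`. -/
def IsFormBound (r : ℕ) (ω : (E →₀ W) →ₗ[ℝ] ℝ) (M : ℝ) : Prop :=
  ∀ (σ : List E) (p : E) (α : W), σ.length ≤ r →
    |ω (diff σ (Finsupp.single p α))| ≤ M * lnorm σ * ‖α‖

/-- The `B^r` norm of a differential form. -/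
def formNorm (r : ℕ) (ω : (E →₀ W) →ₗ[ℝ] ℝ) : ℝ :=
  sInf {M | 0 ≤ M ∧ IsFormBound r ω M}

open Topology

/-- Multiplication of a Dirac chain by a function: `m_f(p;α) = (p; f(p)·α)`. -/
def mulFn (f : E → ℝ) (A : E →₀ W) : E →₀ W :=
  A.sum fun p α => Finsupp.single p (f p • α)

/-- Iterated translation-difference of a function along a list of vectors. -/
def fdiff : List E → (E → ℝ) → E → ℝ
  | [], f => f
  | u :: σ, f => fun p => fdiff σ f (p + u) - fdiff σ f p

/-- `M` is a `B^r`-bound for the function (`0`-form) `f`. -/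
def IsFnBound (r : ℕ) (f : E → ℝ) (M : ℝ) : Prop :=
  ∀ (σ : List E) (p : E), σ.length ≤ r → |fdiff σ f p| ≤ M * lnorm σ

section Aux

lemma mulFn_single (f : E → ℝ) (p : E) (α : W) :
    mulFn f (Finsupp.single p α) = Finsupp.single p (f p • α) := by
  unfold mulFn
  rw [Finsupp.sum_single_index]
  simp

lemma mulFn_add (f : E → ℝ) (A B : E →₀ W) :
    mulFn f (A + B) = mulFn f A + mulFn f B := by
  unfold mulFn
  classical
  rw [Finsupp.sum_add_index] <;> intros <;> simp [smul_add, Finsupp.single_add]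

lemma mulFn_zero (f : E → ℝ) : mulFn f (0 : E →₀ W) = 0 := by
  simp [mulFn]

lemma mulFn_sub (f : E → ℝ) (A B : E →₀ W) :
    mulFn f (A - B) = mulFn f A - mulFn f B := by
  have := mulFn_add f (A - B) B
  rw [sub_add_cancel] at this
  exact eq_sub_of_add_eq this.symm

lemma mulFn_smul (f : E → ℝ) (c : ℝ) (A : E →₀ W) :
    mulFn f (c • A) = c • mulFn f A := by
  unfold mulFn
  rw [Finsupp.sum_smul_index' (by simp), Finsupp.smul_sum]
  refine Finsupp.sum_congr fun p _ => ?_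
  rw [Finsupp.smul_single, smul_comm]

lemma del_single (u p : E) (α : W) :
    del u (Finsupp.single p α) = Finsupp.single (p + u) α - Finsupp.single p α := by
  simp [del, transl, Finsupp.mapDomain_single]

lemma lnorm_nonneg (σ : List E) : 0 ≤ lnorm σ := by
  apply List.prod_nonneg
  intro a ha
  obtain ⟨u, -, rfl⟩ := List.mem_map.mp ha
  exact norm_nonneg u

lemma bddBelow_reps (r : ℕ) (A : E →₀ W) : BddBelow (reps r A) := by
  refine ⟨0, fun c hc => ?_⟩
  obtain ⟨m, σ, p, α, -, -, rfl⟩ := hc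
  exact Finset.sum_nonneg fun i _ => mul_nonneg (lnorm_nonneg _) (norm_nonneg _)

lemma Bnorm_diff_le (r : ℕ) (σ : List E) (p : E) (α : W) (h : σ.length ≤ r) :
    Bnorm r (diff σ (Finsupp.single p α)) ≤ lnorm σ * ‖α‖ := by
  apply csInf_le (bddBelow_reps _ _)
  exact ⟨1, fun _ => σ, fun _ => p, fun _ => α, fun _ => h, by simp, by simp⟩

lemma Bnorm_del_single_le (r : ℕ) (u p : E) (α : W) (hr : 1 ≤ r) :
    Bnorm r (del u (Finsupp.single p α)) ≤ ‖u‖ * ‖α‖ := by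
  have := Bnorm_diff_le r [u] p α (by simpa using hr)
  simpa [diff, lnorm] using this

lemma Bnorm_single_le (r : ℕ) (p : E) (α : W) :
    Bnorm r (Finsupp.single p α) ≤ ‖α‖ := by
  have := Bnorm_diff_le r [] p α (by simp)
  simpa [diff, lnorm] using this

end Aux

/-- Multiplication by a function `f` of class `B^r` commutes with the
prederivative `P_v` up to a derivative term: `[m_f, P_v] = m_{L_v f}`, i.e.
`m_f ∘ P_v − P_v ∘ m_f = m_{L_v f}` as operators on differential chains (here: on the
`B^r` completion `X`, with values in the `B^{r+1}` completion `Y`). -/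
theorem mul_prederivative_commutator {n : ℕ} {W : Type*}
    [NormedAddCommGroup W] [NormedSpace ℝ W]
    (r : ℕ) (v : EuclideanSpace ℝ (Fin n))
    (f : EuclideanSpace ℝ (Fin n) → ℝ)
    (hf : ∃ M, 0 ≤ M ∧ IsFnBound r f M) (hfd : Differentiable ℝ f)
    (X Y : Type*) [NormedAddCommGroup X] [NormedSpace ℝ X]
    [NormedAddCommGroup Y] [NormedSpace ℝ Y]
    (ιX : ((EuclideanSpace ℝ (Fin n)) →₀ W) →ₗ[ℝ] X)
    (hX : ∀ A, ‖ιX A‖ = Bnorm r A) (hXd : DenseRange ιX)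
    (ιY : ((EuclideanSpace ℝ (Fin n)) →₀ W) →ₗ[ℝ] Y)
    (hY : ∀ A, ‖ιY A‖ = Bnorm (r + 1) A)
    (P : X →L[ℝ] Y)
    (hP : ∀ A : (EuclideanSpace ℝ (Fin n)) →₀ W,
      Tendsto (fun t : ℝ => ιY (t⁻¹ • del (t • v) A)) (𝓝[≠] 0) (𝓝 (P (ιX A))))
    (MfX : X →L[ℝ] X) (hMfX : ∀ A, MfX (ιX A) = ιX (mulFn f A))
    (MfY : Y →L[ℝ] Y) (hMfY : ∀ A, MfY (ιY A) = ιY (mulFn f A))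
    (Mg : X →L[ℝ] Y)
    (hMg : ∀ A, Mg (ιX A) = ιY (mulFn (fun p => fderiv ℝ f p v) A)) :
    ∀ J : X, MfY (P J) - P (MfX J) = Mg J := by
  set g : EuclideanSpace ℝ (Fin n) → ℝ := fun p => fderiv ℝ f p v with hg
  -- Step 1: the identity holds on single Dirac chains
  have key : ∀ (p : EuclideanSpace ℝ (Fin n)) (α : W),
      MfY (P (ιX (Finsupp.single p α))) - P (MfX (ιX (Finsupp.single p α)))
        = Mg (ιX (Finsupp.single p α)) := by
    intro p α
    classical
    set S : EuclideanSpace ℝ (Fin n) →₀ W := Finsupp.single p α with hS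
    set ct : ℝ → ℝ := fun t : ℝ => t⁻¹ * (f (p + t • v) - f p) with hct
    -- the slope tends to the directional derivative
    have hderiv : HasDerivAt (fun t : ℝ => f (p + t • v)) (g p) 0 := by
      have hinner : HasDerivAt (fun t : ℝ => p + t • v) v 0 := by
        have := ((hasDerivAt_id (0 : ℝ)).smul_const v).const_add p
        simpa using this
      have houter : HasFDerivAt f (fderiv ℝ f (p + (0 : ℝ) • v)) ((fun t : ℝ => p + t • v) 0) :=
        (hfd _).hasFDerivAt
      have := houter.comp_hasDerivAt 0 hinner
      rw [zero_smul, add_zero] at this; exact this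
    have hslope : Tendsto ct (𝓝[≠] (0 : ℝ)) (𝓝 (g p)) := by
      have := hasDerivAt_iff_tendsto_slope.mp hderiv
      refine this.congr fun t => ?_
      simp [slope, ct, vsub_eq_sub, smul_eq_mul]
    -- limit 1 : MfY ∘ P on S
    have h1 : Tendsto (fun t : ℝ => ιY (mulFn f (t⁻¹ • del (t • v) S)))
        (𝓝[≠] (0 : ℝ)) (𝓝 (MfY (P (ιX S)))) := by
      have := (MfY.continuous.tendsto _).comp (hP S)
      refine this.congr fun t => ?_
      simp only [Function.comp, hMfY]
    -- limit 2 : P ∘ MfX on S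
    have h2 : Tendsto (fun t : ℝ => ιY (t⁻¹ • del (t • v) (mulFn f S)))
        (𝓝[≠] (0 : ℝ)) (𝓝 (P (ιX (mulFn f S)))) := hP (mulFn f S)
    have hsub : Tendsto (fun t : ℝ => ιY (mulFn f (t⁻¹ • del (t • v) S))
          - ιY (t⁻¹ • del (t • v) (mulFn f S)))
        (𝓝[≠] (0 : ℝ)) (𝓝 (MfY (P (ιX S)) - P (ιX (mulFn f S)))) := h1.sub h2
    -- identify the function inside the limit
    have heq : ∀ t : ℝ, ιY (mulFn f (t⁻¹ • del (t • v) S))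
          - ιY (t⁻¹ • del (t • v) (mulFn f S))
        = ιY (Finsupp.single (p + t • v) (ct t • α)) := by
      intro t
      have hcomm : mulFn f (del (t • v) S) - del (t • v) (mulFn f S)
          = Finsupp.single (p + t • v) ((f (p + t • v) - f p) • α) := by
        simp only [hS, del_single, mulFn_sub, mulFn_single]
        rw [sub_smul, Finsupp.single_sub]
        abel
      rw [mulFn_smul, map_smul, map_smul, ← smul_sub, ← map_sub, hcomm,
        ← map_smul, Finsupp.smul_single, smul_smul, hct]
    -- the limit of the commutator chain is ιY (single p (g p • α))
    have h3 : Tendsto (fun t : ℝ => ιY (Finsupp.single (p + t • v) (ct t • α)))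
        (𝓝[≠] (0 : ℝ)) (𝓝 (ιY (Finsupp.single p (g p • α)))) := by
      rw [tendsto_iff_norm_sub_tendsto_zero]
      have hbound : ∀ t : ℝ,
          ‖ιY (Finsupp.single (p + t • v) (ct t • α)) - ιY (Finsupp.single p (g p • α))‖
            ≤ ‖t • v‖ * ‖ct t • α‖ + |ct t - g p| * ‖α‖ := by
        intro t
        have hdecomp : Finsupp.single (p + t • v) (ct t • α) - Finsupp.single p (g p • α)
            = del (t • v) (Finsupp.single p (ct t • α))
              + Finsupp.single p ((ct t - g p) • α) := by
          rw [del_single, sub_smul, Finsupp.single_sub]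
          abel
        calc ‖ιY (Finsupp.single (p + t • v) (ct t • α)) - ιY (Finsupp.single p (g p • α))‖
            = ‖ιY (del (t • v) (Finsupp.single p (ct t • α)))
                + ιY (Finsupp.single p ((ct t - g p) • α))‖ := by
              rw [← map_sub, hdecomp, map_add]
          _ ≤ ‖ιY (del (t • v) (Finsupp.single p (ct t • α)))‖
                + ‖ιY (Finsupp.single p ((ct t - g p) • α))‖ := norm_add_le _ _
          _ ≤ ‖t • v‖ * ‖ct t • α‖ + |ct t - g p| * ‖α‖ := by
              gcongr
              · rw [hY]; exact Bnorm_del_single_le (r + 1) _ _ _ (by omega)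
              · rw [hY]
                calc Bnorm (r + 1) (Finsupp.single p ((ct t - g p) • α))
                    ≤ ‖(ct t - g p) • α‖ := Bnorm_single_le _ _ _
                  _ = |ct t - g p| * ‖α‖ := by rw [norm_smul, Real.norm_eq_abs]
      have hlim : Tendsto (fun t : ℝ => ‖t • v‖ * ‖ct t • α‖ + |ct t - g p| * ‖α‖)
          (𝓝[≠] (0 : ℝ)) (𝓝 0) := by
        have ht0 : Tendsto (fun t : ℝ => t) (𝓝[≠] (0 : ℝ)) (𝓝 0) :=
          tendsto_nhdsWithin_of_tendsto_nhds tendsto_id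
        have l1 : Tendsto (fun t : ℝ => ‖t • v‖ * ‖ct t • α‖) (𝓝[≠] (0 : ℝ))
            (𝓝 (‖(0 : ℝ) • v‖ * ‖g p • α‖)) := by
          exact ((ht0.smul_const v).norm.mul ((hslope.smul_const α).norm))
        have l2 : Tendsto (fun t : ℝ => |ct t - g p| * ‖α‖) (𝓝[≠] (0 : ℝ))
            (𝓝 (|g p - g p| * ‖α‖)) :=
          ((hslope.sub_const (g p)).abs.mul_const ‖α‖)
        have := l1.add l2
        simpa using this
      exact squeeze_zero (fun t => norm_nonneg _) hbound hlim
    -- uniqueness of limits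
    have huniq : MfY (P (ιX S)) - P (ιX (mulFn f S)) = ιY (Finsupp.single p (g p • α)) :=
      tendsto_nhds_unique (hsub.congr fun t => heq t) h3
    rw [← hMfX S] at huniq
    rw [huniq, hS, hMg, mulFn_single]
  -- Step 2: extend by additivity to all Dirac chains
  have key' : ∀ A : EuclideanSpace ℝ (Fin n) →₀ W, MfY (P (ιX A)) - P (MfX (ιX A)) = Mg (ιX A) := by
    intro A
    induction A using Finsupp.induction with
    | zero => simp
    | single_add p α A _ _ ih =>
      simp only [map_add]
      rw [sub_eq_iff_eq_add] at ih ⊢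
      have hk := key p α
      rw [sub_eq_iff_eq_add] at hk
      rw [ih, hk]
      abel
  -- Step 3: extend by density and continuity to all of X
  intro J
  have hclosed : IsClosed {J : X | MfY (P J) - P (MfX J) = Mg J} :=
    isClosed_eq (by continuity) Mg.continuous
  have hsubset : Set.range ιX ⊆ {J : X | MfY (P J) - P (MfX J) = Mg J} := by
    rintro _ ⟨A, rfl⟩
    exact key' A
  have := hclosed.closure_subset_iff.mpr hsubset
  exact this (hXd J)
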